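/- For every integer m ≥ 1, the identity a(m) = b(m+1) − b(m) holds, where a(m) = Σ_{k=0}^{⌊(m+1)/2⌋} C(m−1, k)·C(m−k+1, k) and b(m) = Σ_{k=0}^{⌊m/2⌋} C(m−1, k)·C(m−k, k). -/
import Mathlib


/-- `a(m) = Σ_{k=0}^{⌊(m+1)/2⌋} C(m−1, k)·C(m−k+1, k)` (OEIS A025566). -/
def aSeq (m : ℕ) : ℕ :=
  ∑ k ∈ Finset.range ((m + 1) / 2 + 1), Nat.choose (m - 1) k * Nat.choose (m - k + 1) k

/-- `b(m) = Σ_{k=0}^{⌊m/2⌋} C(m−1, k)·C(m−k, k)` (OEIS A005773). -/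
def bSeq (m : ℕ) : ℕ :=
  ∑ k ∈ Finset.range (m / 2 + 1), Nat.choose (m - 1) k * Nat.choose (m - k) k

/-- binomial coefficient with integer lower index (zero when negative). -/
def ch (n : ℕ) (z : ℤ) : ℕ := if z < 0 then 0 else n.choose z.toNat

lemma ch_coe (n k : ℕ) : ch n (k : ℤ) = n.choose k := by
  simp [ch]

lemma ch_pascal (n : ℕ) (z : ℤ) : ch (n+1) z = ch n z + ch n (z-1) := by
  rcases lt_trichotomy z 0 with h | h | h
  · have h1 : z - 1 < 0 := by omega
    simp [ch, h, h1]
  · subst h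
    simp [ch]
  · have h0 : ¬ z < 0 := by omega
    have h1 : ¬ z - 1 < 0 := by omega
    have h2 : z.toNat = (z-1).toNat + 1 := by omega
    simp only [ch, h0, h1, if_neg, if_false]
    rw [h2, Nat.choose_succ_succ]
    simp only [Nat.succ_eq_add_one]
    omega

/-- `Hs n t = Σ_{j=0}^{n} C(n,j)·C(n+1−j, j+t)`. -/
def Hs (n : ℕ) (t : ℤ) : ℕ :=
  ∑ j ∈ Finset.range (n+1), n.choose j * ch (n+1-j) ((j : ℤ) + t)

lemma Hs_aux (n : ℕ) (s : ℤ) :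
    ∑ j ∈ Finset.range (n+2), (n+1).choose j * ch (n+1-j) ((j : ℤ) + s)
      = Hs n s + ∑ j ∈ Finset.range (n+1), n.choose j * ch (n-j) ((j : ℤ) + 1 + s) := by
  rw [Finset.sum_range_succ' (fun j => (n+1).choose j * ch (n+1-j) ((j : ℤ) + s))]
  have e1 : ∀ j ∈ Finset.range (n+1),
      (n+1).choose (j+1) * ch (n+1-(j+1)) (((j+1 : ℕ) : ℤ) + s)
        = n.choose j * ch (n-j) ((j : ℤ) + 1 + s)
          + n.choose (j+1) * ch (n-j) ((j : ℤ) + 1 + s) := by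
    intro j hj
    have h1 : n + 1 - (j+1) = n - j := by omega
    have h2 : (((j+1 : ℕ) : ℤ)) + s = (j : ℤ) + 1 + s := by push_cast; ring
    rw [h1, h2, Nat.choose_succ_succ, add_mul]
  rw [Finset.sum_congr rfl e1, Finset.sum_add_distrib]
  have e2 : Hs n s = (∑ j ∈ Finset.range (n+1), n.choose (j+1) * ch (n-j) ((j : ℤ) + 1 + s))
      + (n+1).choose 0 * ch (n+1-0) (((0:ℕ) : ℤ) + s) := by
    unfold Hs
    rw [Finset.sum_range_succ' (fun j => n.choose j * ch (n+1-j) ((j : ℤ) + s))]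
    rw [Finset.sum_range_succ (fun j => n.choose (j+1) * ch (n-j) ((j : ℤ) + 1 + s))]
    simp only [Nat.choose_succ_self, zero_mul, add_zero, Nat.choose_zero_right, one_mul,
      Nat.cast_zero, zero_add, Nat.sub_zero]
    congr 1
    apply Finset.sum_congr rfl
    intro j hj
    have h1 : n + 1 - (j+1) = n - j := by omega
    have h2 : (((j+1 : ℕ) : ℤ)) + s = (j : ℤ) + 1 + s := by push_cast; ring
    rw [h1, h2]
  rw [e2]
  ring

lemma Hs_rec (n : ℕ) (t : ℤ) :
    Hs (n+1) t = Hs n (t-1) + Hs n t + Hs n (t+1) := by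
  have lhs : Hs (n+1) t
      = (∑ j ∈ Finset.range (n+2), (n+1).choose j * ch (n+1-j) ((j : ℤ) + t))
        + (∑ j ∈ Finset.range (n+2), (n+1).choose j * ch (n+1-j) ((j : ℤ) + (t-1))) := by
    unfold Hs
    rw [← Finset.sum_add_distrib]
    apply Finset.sum_congr rfl
    intro j hj
    simp only [Finset.mem_range] at hj
    have h1 : n + 1 + 1 - j = (n + 1 - j) + 1 := by omega
    rw [h1, ch_pascal, mul_add]
    congr 2
    ring
  rw [lhs, Hs_aux, Hs_aux]
  have key : (∑ j ∈ Finset.range (n+1), n.choose j * ch (n-j) ((j : ℤ) + 1 + t))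
      + (∑ j ∈ Finset.range (n+1), n.choose j * ch (n-j) ((j : ℤ) + 1 + (t-1)))
      = Hs n (t+1) := by
    unfold Hs
    rw [← Finset.sum_add_distrib]
    apply Finset.sum_congr rfl
    intro j hj
    simp only [Finset.mem_range] at hj
    have h1 : n + 1 - j = (n - j) + 1 := by omega
    rw [h1, ch_pascal, mul_add]
    congr 2 <;> ring_nf
  omega

lemma Hs_symm (n : ℕ) (t : ℤ) : Hs n t = Hs n (1 - t) := by
  induction n generalizing t with
  | zero =>
      unfold Hs
      simp only [Finset.range_one, Finset.sum_singleton, Nat.choose_self, one_mul,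
        Nat.cast_zero, zero_add]
      rcases lt_trichotomy t 0 with h | h | h
      · have h1 : ¬ (1 - t < 0) := by omega
        have h2 : 2 ≤ (1 - t).toNat := by omega
        simp [ch, h, h1, Nat.choose_eq_zero_of_lt (by omega : 1 < (1-t).toNat)]
      · subst h; simp [ch]
      · rcases eq_or_lt_of_le (by omega : (1:ℤ) ≤ t) with h' | h'
        · rw [← h']; simp [ch]
        · have h1 : 1 - t < 0 := by omega
          have h0 : ¬ t < 0 := by omega
          simp [ch, h1, h0, Nat.choose_eq_zero_of_lt (by omega : 1 < t.toNat)]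
  | succ n ih =>
      rw [Hs_rec, Hs_rec, ih (t-1), ih t, ih (t+1)]
      have e1 : 1 - (t - 1) = (1 - t) + 1 := by ring
      have e2 : 1 - (t + 1) = (1 - t) - 1 := by ring
      rw [e1, e2]
      omega

lemma Hs_ext (n : ℕ) (s : ℤ) :
    Hs n s = ∑ j ∈ Finset.range (n+2), n.choose j * ch (n+1-j) ((j : ℤ) + s) := by
  unfold Hs
  symm
  rw [Finset.sum_range_succ]
  simp [Nat.choose_succ_self]

lemma bSeq_eq (n : ℕ) : bSeq (n+1) = Hs n 0 := by
  unfold bSeq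
  have hsub : Finset.range ((n+1)/2 + 1) ⊆ Finset.range (n+2) :=
    Finset.range_subset_range.mpr (by omega)
  have hz : ∀ k ∈ Finset.range (n+2), k ∉ Finset.range ((n+1)/2 + 1) →
      (n+1-1).choose k * (n+1-k).choose k = 0 := by
    intro k hk hk'
    simp only [Finset.mem_range] at hk hk'
    rcases Nat.lt_or_ge k (n+2) with _ | _
    · rw [Nat.choose_eq_zero_of_lt (show n+1-k < k by omega), mul_zero]
    · omega
  rw [Finset.sum_subset hsub hz, Hs_ext]
  apply Finset.sum_congr rfl
  intro k hk
  simp only [Nat.add_sub_cancel, add_zero, ch_coe]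

lemma aSeq_eq (n : ℕ) : aSeq (n+1) = Hs n 0 + Hs n (-1) := by
  unfold aSeq
  have hsub : Finset.range ((n+1+1)/2 + 1) ⊆ Finset.range (n+2) :=
    Finset.range_subset_range.mpr (by omega)
  have hz : ∀ k ∈ Finset.range (n+2), k ∉ Finset.range ((n+1+1)/2 + 1) →
      (n+1-1).choose k * (n+1-k+1).choose k = 0 := by
    intro k hk hk'
    simp only [Finset.mem_range] at hk hk'
    rw [Nat.choose_eq_zero_of_lt (show n+1-k+1 < k by omega), mul_zero]
  rw [Finset.sum_subset hsub hz, Hs_ext n 0, Hs_ext n (-1), ← Finset.sum_add_distrib]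
  apply Finset.sum_congr rfl
  intro k hk
  simp only [Nat.add_sub_cancel, add_zero]
  have h2 : (k:ℤ) + (-1) = (k:ℤ) - 1 := by ring
  rw [h2, ← ch_coe (n+1-k+1) k, show n+1-k+1 = (n+1-k)+1 from rfl, ch_pascal, mul_add]

/-- For every `m ≥ 1`, `a(m) = b(m+1) − b(m)`. -/
theorem aSeq_eq_bSeq_sub (m : ℕ) (hm : 1 ≤ m) :
    (aSeq m : ℤ) = (bSeq (m + 1) : ℤ) - (bSeq m : ℤ) := by
  obtain ⟨n, rfl⟩ : ∃ n, m = n + 1 := ⟨m - 1, by omega⟩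
  have h1 : bSeq (n+1+1) = Hs (n+1) 0 := bSeq_eq (n+1)
  have h2 : bSeq (n+1) = Hs n 0 := bSeq_eq n
  have h3 : aSeq (n+1) = Hs n 0 + Hs n (-1) := aSeq_eq n
  have h4 := Hs_rec n 0
  norm_num at h4
  have h5 := Hs_symm n 1
  norm_num at h5
  have : aSeq (n+1) + bSeq (n+1) = bSeq (n+1+1) := by omega
  push_cast [← this]
  ring
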